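/- For an element x of H with core c, let x^R denote the element of H whose core is the reversal of c. Suppose x and y are distinct elements of H such that x and y are adjacent in the unimodal order and x^R and y^R are also adjacent in the unimodal order. Then the cores of x and y are the two one-symbol strings (+) and (−). (This is the symbolic content of the theorem that the first homoclinic bifurcation of the invariant manifolds of the fixed point of the area preserving Hénon map is the saddle-node bifurcation of the pair of homoclinic orbits with cores (+) and (−).) -/

import Mathlib

set_option linter.unnecessarySeqFocus false

/-- Symbols: `true` stands for `+`, `false` stands for `−`.
The unimodal order on one-sided sequences: `a <_u b` iff they differ, and at the
first index `n` where they differ, `a n = −` exactly when the number of `−`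
symbols among `a 0, …, a (n−1)` is even. -/
def UnimodalLt (a b : ℕ → Bool) : Prop :=
  ∃ n : ℕ, (∀ m : ℕ, m < n → a m = b m) ∧ a n ≠ b n ∧
    (a n = false ↔ Even (((Finset.range n).filter (fun m => a m = false)).card))

/-- The homoclinic sequence with core `c`: the finite string `c`, followed by a
single `−`, followed by the constant sequence of `+`'s. -/
def homSeq (c : List Bool) : ℕ → Bool := fun n => (c ++ [false]).getD n true

/-- `H` is the set of all homoclinic sequences. -/
def homSet : Set (ℕ → Bool) := Set.range homSeq

/-- Two sequences are adjacent (neighbors) if they are distinct and no element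
of `H` lies strictly between them in the unimodal order. -/
def HomAdjacent (x y : ℕ → Bool) : Prop :=
  x ≠ y ∧ ¬ ∃ z ∈ homSet,
    (UnimodalLt x z ∧ UnimodalLt z y) ∨ (UnimodalLt y z ∧ UnimodalLt z x)

/-! ### Auxiliary machinery -/

/-- Number of `−` symbols among the first `n` entries. -/
def cnt (a : ℕ → Bool) (n : ℕ) : ℕ := ((Finset.range n).filter (fun m => a m = false)).card

lemma cnt_succ (a : ℕ → Bool) (n : ℕ) :
    cnt a (n+1) = cnt a n + (if a n = false then 1 else 0) := by
  unfold cnt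
  rw [Finset.range_add_one, Finset.filter_insert]
  split
  · rw [Finset.card_insert_of_notMem (by simp)]
  · simp

lemma cnt_congr {a b : ℕ → Bool} {n : ℕ} (h : ∀ m < n, a m = b m) : cnt a n = cnt b n := by
  unfold cnt
  congr 1
  apply Finset.filter_congr
  intro m hm
  rw [h m (Finset.mem_range.mp hm)]

lemma cnt_const {a : ℕ → Bool} {n : ℕ} (h : ∀ m, n ≤ m → a m = true) :
    ∀ k, n ≤ k → cnt a k = cnt a n := by
  intro k hk
  induction k with
  | zero =>
      have : n = 0 := by omega
      rw [this]
  | succ k ih =>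
      rcases Nat.lt_or_ge n (k+1) with h1 | h1
      · have hnk : n ≤ k := by omega
        rw [cnt_succ, ih hnk, h k hnk]
        simp
      · have : n = k + 1 := by omega
        rw [this]

lemma cond_iff (a : ℕ → Bool) (n : ℕ) :
    ((a n = false ↔ Even (cnt a n)) ↔ Odd (cnt a (n+1))) := by
  rw [cnt_succ]
  cases h : a n <;> simp [h, Nat.even_add_one, Nat.odd_iff, Nat.even_iff] <;> omega

/-- `UnimodalLt` phrased through parity of the count up to `n+1`. -/
lemma ult_iff (a b : ℕ → Bool) :
    UnimodalLt a b ↔ ∃ n : ℕ, (∀ m : ℕ, m < n → a m = b m) ∧ a n ≠ b n ∧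
      Odd (cnt a (n+1)) := by
  unfold UnimodalLt
  constructor <;> rintro ⟨n, h1, h2, h3⟩ <;> refine ⟨n, h1, h2, ?_⟩
  · exact (cond_iff a n).mp h3
  · exact (cond_iff a n).mpr h3

/-- If two sequences differ at `n` and agree before, their counts up to `n+1`
have opposite parity. -/
lemma parity_flip {a b : ℕ → Bool} {n : ℕ} (hag : ∀ m < n, a m = b m) (hne : a n ≠ b n) :
    (Odd (cnt a (n+1)) ↔ ¬ Odd (cnt b (n+1))) := by
  have h := cnt_congr hag
  rw [cnt_succ, cnt_succ, h]
  cases ha : a n <;> cases hb : b n <;> simp_all [Nat.odd_iff] <;> omega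

lemma homSeq_core (c : List Bool) (m : ℕ) (h : m < c.length) : homSeq c m = c.get ⟨m,h⟩ := by
  unfold homSeq
  rw [List.getD_append _ _ _ _ h]
  simp [List.getD, List.getElem?_eq_getElem h]

lemma homSeq_len (c : List Bool) : homSeq c c.length = false := by
  unfold homSeq
  rw [List.getD_append_right _ _ _ _ le_rfl]
  simp

lemma homSeq_gt (c : List Bool) (m : ℕ) (h : c.length < m) : homSeq c m = true := by
  unfold homSeq
  apply List.getD_eq_default
  simpa using h

lemma homSeq_core' (c : List Bool) (m : ℕ) (h : m < c.length) :
    homSeq c m = c.getD m true := by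
  unfold homSeq
  rw [List.getD_append _ _ _ _ h]

lemma getD_rev (c : List Bool) (m : ℕ) (h : m < c.length) (d : Bool) :
    c.reverse.getD m d = c.getD (c.length - 1 - m) d := by
  have h' : m < c.reverse.length := by simpa using h
  rw [List.getD_eq_getElem _ _ h', List.getD_eq_getElem _ _ (by omega)]
  rw [List.getElem_reverse]

/-- The core used for the "between" witnesses: the first `j` symbols of `a`,
followed by the symbol `w`. -/
def coreOf (a : ℕ → Bool) (j : ℕ) (w : Bool) : List Bool :=
  (List.ofFn fun i : Fin j => a i.val) ++ [w]

lemma coreOf_length (a : ℕ → Bool) (j : ℕ) (w : Bool) : (coreOf a j w).length = j + 1 := by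
  simp [coreOf]

lemma coreOf_lt (a : ℕ → Bool) (j : ℕ) (w : Bool) {m : ℕ} (h : m < j) :
    homSeq (coreOf a j w) m = a m := by
  have hlen : m < (coreOf a j w).length := by rw [coreOf_length]; omega
  rw [homSeq_core _ _ hlen]
  unfold coreOf
  rw [List.get_eq_getElem]
  rw [List.getElem_append_left (by simpa using h)]
  simp

lemma coreOf_at (a : ℕ → Bool) (j : ℕ) (w : Bool) :
    homSeq (coreOf a j w) j = w := by
  have hlen : j < (coreOf a j w).length := by rw [coreOf_length]; omega
  rw [homSeq_core _ _ hlen]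
  unfold coreOf
  rw [List.get_eq_getElem]
  rw [List.getElem_append_right (by simp)]
  simp

/-- First "between" lemma: if `x <_u y` with first difference at `n`, and the
count of `−`'s of `y` up to some `j+1 > n+1` is even, then some homoclinic
sequence lies strictly between `x` and `y`. -/
lemma between_upper {x y : ℕ → Bool} {n j : ℕ} (hnj : n < j)
    (hag : ∀ m < n, x m = y m) (hne : x n ≠ y n)
    (hodd : Odd (cnt x (n+1))) (heven : Even (cnt y (j+1))) :
    ∃ z ∈ homSet, UnimodalLt x z ∧ UnimodalLt z y := by
  set w : Bool := decide (Odd (cnt y j)) with hw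
  set z : ℕ → Bool := homSeq (coreOf y j w) with hz
  have hzy : ∀ m < j, z m = y m := fun m hm => coreOf_lt y j w hm
  have hzj : z j = w := coreOf_at y j w
  have hcz : cnt z j = cnt y j := cnt_congr hzy
  have hzodd : Odd (cnt z (j+1)) := by
    rw [cnt_succ, hzj, hcz, hw]
    by_cases h : Odd (cnt y j)
    · simp [h]
    · simp [h]
      rw [Nat.odd_add_one]
      simpa using h
  refine ⟨z, ⟨coreOf y j w, rfl⟩, ?_, ?_⟩
  · -- x < z, first difference at n
    rw [ult_iff]
    refine ⟨n, ?_, ?_, hodd⟩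
    · intro m hm
      rw [hag m hm, ← hzy m (by omega)]
    · rw [hzy n hnj]
      exact hne
  · -- z < y, first difference at j
    rw [ult_iff]
    refine ⟨j, hzy, ?_, hzodd⟩
    -- z j ≠ y j since parities of counts up to j+1 differ
    intro hEq
    have : cnt z (j+1) = cnt y (j+1) := by
      rw [cnt_succ, cnt_succ, hcz, hEq]
    rw [this] at hzodd
    exact Nat.not_even_iff_odd.mpr hzodd heven

/-- Second "between" lemma: if `x <_u y` with first difference at `n`, and the
count of `−`'s of `x` up to some `j+1 > n+1` is odd, then some homoclinic
sequence lies strictly between `x` and `y`. -/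
lemma between_lower {x y : ℕ → Bool} {n j : ℕ} (hnj : n < j)
    (hag : ∀ m < n, x m = y m) (hne : x n ≠ y n)
    (hodd : Odd (cnt x (n+1))) (hodd' : Odd (cnt x (j+1))) :
    ∃ z ∈ homSet, UnimodalLt x z ∧ UnimodalLt z y := by
  set w : Bool := decide (Even (cnt x j)) with hw
  set z : ℕ → Bool := homSeq (coreOf x j w) with hz
  have hzx : ∀ m < j, z m = x m := fun m hm => coreOf_lt x j w hm
  have hzj : z j = w := coreOf_at x j w
  have hcz : cnt z j = cnt x j := cnt_congr hzx
  have hzeven : Even (cnt z (j+1)) := by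
    rw [cnt_succ, hzj, hcz, hw]
    by_cases h : Even (cnt x j)
    · simp [h]
    · simp [h]
      rw [Nat.even_add_one]
      simpa using h
  refine ⟨z, ⟨coreOf x j w, rfl⟩, ?_, ?_⟩
  · -- x < z, first difference at j
    rw [ult_iff]
    refine ⟨j, fun m hm => (hzx m hm).symm, ?_, hodd'⟩
    intro hEq
    have : cnt x (j+1) = cnt z (j+1) := by
      rw [cnt_succ, cnt_succ, hcz, hEq]
    rw [this] at hodd'
    exact Nat.not_even_iff_odd.mpr hodd' hzeven
  · -- z < y, first difference at n
    rw [ult_iff]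
    refine ⟨n, ?_, ?_, ?_⟩
    · intro m hm
      rw [hzx m (by omega), hag m hm]
    · rw [hzx n hnj]
      exact hne
    · have : cnt z (n+1) = cnt x (n+1) := cnt_congr fun m hm => hzx m (by omega)
      rw [this]
      exact hodd

lemma homAdjacent_symm {x y : ℕ → Bool} (h : HomAdjacent x y) : HomAdjacent y x := by
  obtain ⟨h1, h2⟩ := h
  refine ⟨h1.symm, fun ⟨z, hz, hc⟩ => h2 ⟨z, hz, hc.symm⟩⟩

/-- Structure of adjacent pairs: if `homSeq c` and `homSeq c'` are adjacent,
their first difference is at `n`, and `homSeq c` is the smaller one, then both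
cores have length exactly `n+1`. -/
lemma core_struct {c c' : List Bool} {n : ℕ}
    (hag : ∀ m < n, homSeq c m = homSeq c' m) (hne : homSeq c n ≠ homSeq c' n)
    (hodd : Odd (cnt (homSeq c) (n+1)))
    (hadj : HomAdjacent (homSeq c) (homSeq c')) :
    c.length = n + 1 ∧ c'.length = n + 1 := by
  set x := homSeq c with hx
  set y := homSeq c' with hy
  -- From adjacency: no even count for y, no odd count for x, beyond n
  have hA : ∀ j, n < j → Odd (cnt y (j+1)) := by
    intro j hj
    rw [← Nat.not_even_iff_odd]
    intro heven
    obtain ⟨z, hz, h1, h2⟩ := between_upper hj hag hne hodd heven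
    exact hadj.2 ⟨z, hz, Or.inl ⟨h1, h2⟩⟩
  have hB : ∀ j, n < j → Even (cnt x (j+1)) := by
    intro j hj
    rw [← Nat.not_odd_iff_even]
    intro hodd'
    obtain ⟨z, hz, h1, h2⟩ := between_lower hj hag hne hodd hodd'
    exact hadj.2 ⟨z, hz, Or.inl ⟨h1, h2⟩⟩
  have hyev : Even (cnt y (n+1)) := by
    rw [← Nat.not_odd_iff_even]
    exact fun h => ((parity_flip hag hne).mp hodd) h
  constructor
  · -- length of c is n+1
    have hxlen : x c.length = false := homSeq_len c
    -- x (n+1) = false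
    have h1 : Even (cnt x (n+2)) := hB (n+1) (by omega)
    have hx1 : x (n+1) = false := by
      by_contra h
      have hxt : x (n+1) = true := by
        cases hv : x (n+1)
        · exact absurd hv h
        · rfl
      rw [cnt_succ, hxt] at h1
      simp at h1
      rw [Nat.even_iff] at h1
      rw [Nat.odd_iff] at hodd
      omega
    have hge : n + 1 ≤ c.length := by
      by_contra h
      push_neg at h
      have := homSeq_gt c (n+1) (by omega)
      rw [← hx, hx1] at this
      exact Bool.false_ne_true this
    have hle : c.length ≤ n + 1 := by
      by_contra h
      push_neg at h
      -- c.length ≥ n+2; counts at c.length and c.length+1 both even, but x c.length = false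
      have e1 : Even (cnt x c.length) := by
        have := hB (c.length - 1) (by omega)
        have hrw : c.length - 1 + 1 = c.length := by omega
        rwa [hrw] at this
      have e2 : Even (cnt x (c.length + 1)) := hB c.length (by omega)
      rw [cnt_succ, hxlen] at e2
      simp at e2
      rw [Nat.even_iff] at e1 e2
      omega
    omega
  · -- length of c' is n+1
    have hylen : y c'.length = false := homSeq_len c'
    have h1 : Odd (cnt y (n+2)) := hA (n+1) (by omega)
    have hy1 : y (n+1) = false := by
      by_contra h
      have hyt : y (n+1) = true := by
        cases hv : y (n+1)
        · exact absurd hv h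
        · rfl
      rw [cnt_succ, hyt] at h1
      simp at h1
      rw [Nat.odd_iff] at h1
      rw [Nat.even_iff] at hyev
      omega
    have hge : n + 1 ≤ c'.length := by
      by_contra h
      push_neg at h
      have := homSeq_gt c' (n+1) (by omega)
      rw [← hy, hy1] at this
      exact Bool.false_ne_true this
    have hle : c'.length ≤ n + 1 := by
      by_contra h
      push_neg at h
      have e1 : Odd (cnt y c'.length) := by
        have := hA (c'.length - 1) (by omega)
        have hrw : c'.length - 1 + 1 = c'.length := by omega
        rwa [hrw] at this
      have e2 : Odd (cnt y (c'.length + 1)) := hA c'.length (by omega)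
      rw [cnt_succ, hylen] at e2
      simp at e2
      rw [Nat.odd_iff] at e1 e2
      omega
    omega

/-- Adjacent homoclinic sequences have cores of the same length that agree
except in the last symbol. -/
lemma adj_struct {c c' : List Bool} (hadj : HomAdjacent (homSeq c) (homSeq c')) :
    c.length = c'.length ∧ 1 ≤ c.length ∧
      (∀ m, m + 1 < c.length → homSeq c m = homSeq c' m) ∧
      homSeq c (c.length - 1) ≠ homSeq c' (c.length - 1) := by
  set x := homSeq c with hx
  set y := homSeq c' with hy
  have hne : x ≠ y := hadj.1
  have hex : ∃ n, x n ≠ y n := by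
    by_contra h
    push_neg at h
    exact hne (funext h)
  classical
  set n := Nat.find hex with hn
  have hne_n : x n ≠ y n := Nat.find_spec hex
  have hag : ∀ m < n, x m = y m := by
    intro m hm
    by_contra h
    have hle : n ≤ m := Nat.find_le h
    omega
  have hlen : c.length = n + 1 ∧ c'.length = n + 1 := by
    rcases Nat.even_or_odd (cnt x (n+1)) with hev | hodd
    · have hnx : ¬ Odd (cnt x (n+1)) := Nat.not_odd_iff_even.mpr hev
      have hodd' : Odd (cnt y (n+1)) := by
        by_contra h
        exact hnx ((parity_flip hag hne_n).mpr h)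
      have := core_struct (fun m hm => (hag m hm).symm) (Ne.symm hne_n) hodd'
        (homAdjacent_symm hadj)
      exact ⟨this.2, this.1⟩
    · exact core_struct hag hne_n hodd hadj
  refine ⟨by omega, by omega, ?_, ?_⟩
  · intro m hm
    exact hag m (by omega)
  · have : c.length - 1 = n := by omega
    rw [this]
    exact hne_n

/-- **The first homoclinic bifurcation of the area preserving Hénon map (symbolic
content).** If two distinct homoclinic sequences are adjacent in the unimodal
order, and the sequences with reversed cores are also adjacent (double
neighbors, by time-reversal symmetry), then the cores are the two one-symbol
strings `(+)` and `(−)`. -/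
theorem first_homoclinic_bifurcation (c c' : List Bool) (hcc' : c ≠ c')
    (hU : HomAdjacent (homSeq c) (homSeq c'))
    (hS : HomAdjacent (homSeq c.reverse) (homSeq c'.reverse)) :
    (c = [true] ∧ c' = [false]) ∨ (c = [false] ∧ c' = [true]) := by
  obtain ⟨hlenU, honeU, hagU, hneU⟩ := adj_struct hU
  obtain ⟨hlenS, honeS, hagS, hneS⟩ := adj_struct hS
  simp only [List.length_reverse] at hlenS hneS honeS hagS
  -- The cores have length 1
  have hone : c.length = 1 := by
    by_contra h
    have h2 : 2 ≤ c.length := by omega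
    -- From U: sequences agree at position 0; from S: reversed sequences disagree only
    -- at their last position c.length - 1, i.e., the cores disagree at position 0.
    have hagr0 : homSeq c 0 = homSeq c' 0 := hagU 0 (by omega)
    rw [homSeq_core' c 0 (by omega), homSeq_core' c' 0 (by omega)] at hagr0
    rw [homSeq_core' c.reverse (c.length - 1) (by simp; omega),
      homSeq_core' c'.reverse (c.length - 1) (by simp; omega)] at hneS
    rw [getD_rev c (c.length - 1) (by omega), getD_rev c' (c.length - 1) (by omega)] at hneS
    have e1 : c.length - 1 - (c.length - 1) = 0 := by omega
    have e2 : c'.length - 1 - (c.length - 1) = 0 := by omega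
    rw [e1, e2] at hneS
    exact hneS hagr0
  -- so c = [a], c' = [b], a ≠ b
  have hone' : c'.length = 1 := by omega
  obtain ⟨a, ha⟩ : ∃ a, c = [a] := by
    cases c with
    | nil => simp at hone
    | cons a t =>
        cases t with
        | nil => exact ⟨a, rfl⟩
        | cons b s => simp at hone
  obtain ⟨b, hb⟩ : ∃ b, c' = [b] := by
    cases c' with
    | nil => simp at hone'
    | cons a t =>
        cases t with
        | nil => exact ⟨a, rfl⟩
        | cons x s => simp at hone'
  subst ha hb
  have hab : a ≠ b := by
    intro h
    exact hcc' (by rw [h])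
  cases a <;> cases b <;> simp_all
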